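/- Let G be a caching instance in which some set 𝒞₀ of caches all have the same neighborhood (i.e., are accessible by exactly the same set of users). If |𝒞₀| > S where S is the number of contents, let G' be obtained by deleting from 𝒞₀ all but the S caches of largest capacity. Then for every target ℓ, there is a feasible caching allocation of G achieving cache hit rate at least ℓ if and only if there is one for G'. -/

import Mathlib

attribute [local instance] Classical.propDecidable

noncomputable section

variable {C U S : Type*} [Fintype C] [Fintype U] [Fintype S]

/-- The set of contents stored (under allocation `Z`) in some cache adjacent to user `u`. -/
def Hset (adj : U → C → Prop) (Z : C → Finset S) (u : U) : Finset S :=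
  Finset.univ.filter (fun s => ∃ c, adj u c ∧ s ∈ Z c)

/-- The cache hit rate of allocation `Z`. -/
def CH (adj : U → C → Prop) (w : U → ℚ) (p : U → S → ℚ) (Z : C → Finset S) : ℚ :=
  ∑ u, ∑ s ∈ Hset adj Z u, w u * p u s

/-- From any family of finsets indexed by a finset `A`, one can extract a subfamily of
at most `|⋃ A|` indices covering the whole union. -/
lemma exists_subcover (Z : C → Finset S) (A : Finset C) :
    ∃ D ⊆ A, D.card ≤ (A.biUnion Z).card ∧ A.biUnion Z ⊆ D.biUnion Z := by
  induction A using Finset.strongInduction with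
  | _ A ih =>
    by_cases h : ∃ c ∈ A, Z c ⊆ (A.erase c).biUnion Z
    · obtain ⟨c, hc, hsub⟩ := h
      obtain ⟨D, hD, hcard, hcov⟩ := ih (A.erase c) (Finset.erase_ssubset hc)
      have hbe : A.biUnion Z ⊆ (A.erase c).biUnion Z := by
        intro s hs
        obtain ⟨c', hc', hs'⟩ := Finset.mem_biUnion.1 hs
        by_cases hcc : c' = c
        · exact hsub (hcc ▸ hs')
        · exact Finset.mem_biUnion.2 ⟨c', Finset.mem_erase.2 ⟨hcc, hc'⟩, hs'⟩
      refine ⟨D, hD.trans (Finset.erase_subset _ _), ?_, hbe.trans hcov⟩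
      exact hcard.trans (Finset.card_le_card
        (Finset.biUnion_subset_biUnion_of_subset_left _ (Finset.erase_subset _ _)))
    · push_neg at h
      have hx : ∀ c ∈ A, ∃ x, x ∈ Z c ∧ x ∉ (A.erase c).biUnion Z := by
        intro c hc
        obtain ⟨x, hx1, hx2⟩ := Finset.not_subset.1 (h c hc)
        exact ⟨x, hx1, hx2⟩
      refine ⟨A, le_refl _, ?_, le_refl _⟩
      rcases A.eq_empty_or_nonempty with rfl | ⟨c₀, hc₀⟩
      · simp
      haveI : Nonempty S := ⟨(hx c₀ hc₀).choose⟩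
      set f : C → S := fun c => if hc : c ∈ A then (hx c hc).choose else Classical.arbitrary S
        with hf
      refine Finset.card_le_card_of_injOn f ?_ ?_
      · intro c hc
        refine Finset.mem_biUnion.2 ⟨c, hc, ?_⟩
        simp only [hf, dif_pos (show c ∈ A from hc)]
        exact (hx c hc).choose_spec.1
      · intro c hc c' hc' heq
        simp only [Finset.mem_coe] at hc hc'
        by_contra hne
        have h1 : f c ∈ Z c' := by
          rw [heq]; simp only [hf, dif_pos hc']; exact (hx c' hc').choose_spec.1
        have h2 : f c ∉ (A.erase c).biUnion Z := by
          simp only [hf, dif_pos hc]; exact (hx c hc).choose_spec.2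
        exact h2 (Finset.mem_biUnion.2 ⟨c', Finset.mem_erase.2 ⟨fun h => hne h.symm, hc'⟩, h1⟩)

/-- Deleting all but the `S` largest-capacity caches from a set `C₀` of caches with
identical neighborhoods preserves the achievable cache hit rates.  The instance `G'`
is modelled by forcing deleted caches to store nothing. -/
theorem delete_duplicate_caches
    (adj : U → C → Prop) (σ : S → ℕ) (κ : C → ℕ) (p : U → S → ℚ) (w : U → ℚ)
    (C₀ keep : Finset C)
    (hsame : ∀ c ∈ C₀, ∀ c' ∈ C₀, ∀ u, adj u c ↔ adj u c')
    (hbig : Fintype.card S < C₀.card)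
    (hkeep : keep ⊆ C₀) (hkeepcard : keep.card = Fintype.card S)
    (hmax : ∀ c ∈ C₀ \ keep, ∀ c' ∈ keep, κ c ≤ κ c')
    (ℓ : ℚ) :
    (∃ Z : C → Finset S, (∀ c, (∑ s ∈ Z c, σ s) ≤ κ c) ∧ ℓ ≤ CH adj w p Z) ↔
    (∃ Z : C → Finset S, (∀ c, (∑ s ∈ Z c, σ s) ≤ κ c) ∧
      (∀ c ∈ C₀ \ keep, Z c = ∅) ∧ ℓ ≤ CH adj w p Z) := by
  constructor
  · rintro ⟨Z, hfeas, hch⟩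
    -- extract a subcover D ⊆ C₀ with |D| ≤ |S|
    obtain ⟨D, hD, hDcard, hDcov⟩ := exists_subcover Z C₀
    have hDS : D.card ≤ keep.card := by
      rw [hkeepcard]
      exact hDcard.trans ((Finset.card_le_univ _).trans_eq (by simp))
    -- injection from D \ keep into keep \ D
    have hdiffcard : (D \ keep).card ≤ (keep \ D).card := by
      have h1 := Finset.card_sdiff_add_card_inter D keep
      have h2 := Finset.card_sdiff_add_card_inter keep D
      rw [Finset.inter_comm keep D] at h2
      omega
    obtain ⟨T, hT, hTcard⟩ := Finset.exists_subset_card_eq hdiffcard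
    have e : (↑(D \ keep) : Finset C) ≃ T := Finset.equivOfCardEq hTcard.symm
    set g : C → C := fun d => if h : d ∈ D \ keep then (e ⟨d, h⟩ : C) else d with hg
    set f : C → C := fun d => if d ∈ keep then d else g d with hfdef
    have hgmem : ∀ d ∈ D \ keep, g d ∈ keep \ D := by
      intro d hd
      simp only [hg, dif_pos hd]
      exact hT (e ⟨d, hd⟩).2
    have hfkeep : ∀ d ∈ D, f d ∈ keep := by
      intro d hd
      by_cases h : d ∈ keep
      · simpa [hfdef, h]
      · have := hgmem d (Finset.mem_sdiff.2 ⟨hd, h⟩)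
        simp only [hfdef, if_neg h]
        exact (Finset.mem_sdiff.1 this).1
    have hfinj : ∀ d ∈ D, ∀ d' ∈ D, f d = f d' → d = d' := by
      intro d hd d' hd' heq
      by_cases h : d ∈ keep <;> by_cases h' : d' ∈ keep
      · simpa [hfdef, h, h'] using heq
      · exfalso
        simp only [hfdef, if_pos h, if_neg h'] at heq
        have := hgmem d' (Finset.mem_sdiff.2 ⟨hd', h'⟩)
        rw [← heq] at this
        exact (Finset.mem_sdiff.1 this).2 hd
      · exfalso
        simp only [hfdef, if_neg h, if_pos h'] at heq
        have := hgmem d (Finset.mem_sdiff.2 ⟨hd, h⟩)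
        rw [heq] at this
        exact (Finset.mem_sdiff.1 this).2 hd'
      · simp only [hfdef, if_neg h, if_neg h'] at heq
        have hd1 : d ∈ D \ keep := Finset.mem_sdiff.2 ⟨hd, h⟩
        have hd2 : d' ∈ D \ keep := Finset.mem_sdiff.2 ⟨hd', h'⟩
        simp only [hg, dif_pos hd1, dif_pos hd2] at heq
        have : e ⟨d, hd1⟩ = e ⟨d', hd2⟩ := Subtype.ext heq
        exact congrArg Subtype.val (e.injective this)
    -- the new allocation
    set Z' : C → Finset S := fun c =>
      if c ∈ C₀ then (D.filter (fun d => f d = c)).biUnion Z else Z c with hZ'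
    have hZ'keep : ∀ d ∈ D, ∀ s, s ∈ Z d → s ∈ Z' (f d) := by
      intro d hd s hs
      have hfd : f d ∈ C₀ := hkeep (hfkeep d hd)
      simp only [hZ', if_pos hfd]
      exact Finset.mem_biUnion.2 ⟨d, Finset.mem_filter.2 ⟨hd, rfl⟩, hs⟩
    refine ⟨Z', ?_, ?_, ?_⟩
    · -- capacity
      intro c
      by_cases hc : c ∈ C₀
      · simp only [hZ', if_pos hc]
        rcases (D.filter (fun d => f d = c)).eq_empty_or_nonempty with he | ⟨d, hd⟩
        · simp [he]
        · obtain ⟨hdD, hfd⟩ := Finset.mem_filter.1 hd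
          have hsingle : D.filter (fun d' => f d' = c) = {d} := by
            apply Finset.eq_singleton_iff_unique_mem.2
            refine ⟨hd, fun d' hd' => ?_⟩
            obtain ⟨hd'D, hfd'⟩ := Finset.mem_filter.1 hd'
            exact hfinj d' hd'D d hdD (hfd'.trans hfd.symm)
          rw [hsingle, Finset.singleton_biUnion]
          refine (hfeas d).trans ?_
          by_cases h : d ∈ keep
          · have : f d = d := by simp [hfdef, h]
            rw [← hfd, this]
          · have hc' : c ∈ keep := hfd ▸ hfkeep d hdD
            exact hmax d (Finset.mem_sdiff.2 ⟨hD hdD, h⟩) c hc'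
      · simpa [hZ', if_neg hc] using hfeas c
    · -- deleted caches empty
      intro c hc
      obtain ⟨hc1, hc2⟩ := Finset.mem_sdiff.1 hc
      simp only [hZ', if_pos hc1]
      apply Finset.eq_empty_of_forall_notMem
      intro s hs
      obtain ⟨d, hd, _⟩ := Finset.mem_biUnion.1 hs
      obtain ⟨hdD, hfd⟩ := Finset.mem_filter.1 hd
      exact hc2 (hfd ▸ hfkeep d hdD)
    · -- cache hit rate preserved
      have hH : ∀ u, Hset adj Z' u = Hset adj Z u := by
        intro u
        ext s
        simp only [Hset, Finset.mem_filter, Finset.mem_univ, true_and]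
        constructor
        · rintro ⟨c, hadj, hs⟩
          by_cases hc : c ∈ C₀
          · simp only [hZ', if_pos hc] at hs
            obtain ⟨d, hd, hsd⟩ := Finset.mem_biUnion.1 hs
            obtain ⟨hdD, _⟩ := Finset.mem_filter.1 hd
            exact ⟨d, (hsame c hc d (hD hdD) u).1 hadj, hsd⟩
          · exact ⟨c, hadj, by simpa [hZ', if_neg hc] using hs⟩
        · rintro ⟨c, hadj, hs⟩
          by_cases hc : c ∈ C₀
          · have : s ∈ D.biUnion Z := hDcov (Finset.mem_biUnion.2 ⟨c, hc, hs⟩)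
            obtain ⟨d, hdD, hsd⟩ := Finset.mem_biUnion.1 this
            refine ⟨f d, ?_, hZ'keep d hdD s hsd⟩
            exact (hsame c hc (f d) (hkeep (hfkeep d hdD)) u).1 hadj
          · exact ⟨c, hadj, by simp [hZ', if_neg hc, hs]⟩
      have : CH adj w p Z' = CH adj w p Z := by
        unfold CH
        exact Finset.sum_congr rfl fun u _ => by rw [hH u]
      linarith
  · rintro ⟨Z, hfeas, _, hch⟩
    exact ⟨Z, hfeas, hch⟩

end
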